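/- Let W be a finite-dimensional vector space over ZMod 2 and B : W → W → ZMod 2 a nondegenerate alternating bilinear form. Let Q be the set of all quadratic refinements of B. Then for every α ∈ W, one has the integer identity Σ_{q ∈ Q} Σ_{β ∈ W} χ(q β + q α) = card W. (Equivalently, writing dim W = 2g, card W = 2^{2g} and 2^{−g}·Σ_{β∈W} χ(q β) = (−1)^{Arf(q)}: for every α, 2^{−g} Σ_{q∈Q} (−1)^{Arf(q)} (−1)^{q(α)} = 1. This is equation (1) of the paper.) -/

import Mathlib

set_option linter.unusedSectionVars false
open scoped BigOperators

/-- The sign character `χ : ZMod 2 → ℤ`, `χ 0 = 1`, `χ 1 = -1`. -/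
def chi : ZMod 2 → ℤ := fun x => if x = 0 then 1 else -1

lemma chi_add : ∀ a b : ZMod 2, chi (a + b) = chi a * chi b := by decide

lemma zmod2_cases : ∀ c : ZMod 2, c = 0 ∨ c = 1 := by decide

lemma zmod2_add_self : ∀ a : ZMod 2, a + a = 0 := by decide

section aux
variable {W : Type*} [AddCommGroup W] [Module (ZMod 2) W]

lemma w_add_self (x : W) : x + x = 0 := by
  have : x + x = (1 + 1 : ZMod 2) • x := by rw [add_smul, one_smul]
  rw [this, show (1 + 1 : ZMod 2) = 0 by decide, zero_smul]

omit [Module (ZMod 2) W] in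
lemma map_zero' {f : W → ZMod 2} (hf : ∀ x y : W, f (x + y) = f x + f y) : f 0 = 0 := by
  have := hf 0 0
  simp only [add_zero] at this
  have h := congrArg (fun t => t + f 0) this
  simpa [add_assoc, zmod2_add_self (f 0)] using h.symm

lemma map_smul' {f : W → ZMod 2} (hf : ∀ x y : W, f (x + y) = f x + f y)
    (c : ZMod 2) (x : W) : f (c • x) = c * f x := by
  rcases zmod2_cases c with h | h <;> subst h
  · simp [map_zero' hf]
  · simp

omit [Module (ZMod 2) W] in
lemma map_sum' {f : W → ZMod 2} (hf : ∀ x y : W, f (x + y) = f x + f y)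
    {ι : Type*} (s : Finset ι) (g : ι → W) :
    f (∑ i ∈ s, g i) = ∑ i ∈ s, f (g i) := by
  classical
  induction s using Finset.cons_induction with
  | empty => simpa using map_zero' hf
  | cons a s ha ih => rw [Finset.sum_cons, Finset.sum_cons, hf, ih]

end aux

section main
variable {W : Type*} [AddCommGroup W] [Module (ZMod 2) W] [Fintype W] [DecidableEq W]
variable (B : W → W → ZMod 2)

lemma Bsymm (hB₁ : ∀ x y z : W, B (x + y) z = B x z + B y z)
    (hB₂ : ∀ x y z : W, B z (x + y) = B z x + B z y)
    (hBalt : ∀ x : W, B x x = 0) (x y : W) : B x y = B y x := by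
  have h := hBalt (x + y)
  rw [hB₁, hB₂, hB₂, hBalt, hBalt, zero_add, add_zero] at h
  have : ∀ a b : ZMod 2, a + b = 0 → a = b := by decide
  exact this _ _ h

/-- Expansion of B over a basis. -/
lemma B_expand (hB₁ : ∀ x y z : W, B (x + y) z = B x z + B y z)
    (hB₂ : ∀ x y z : W, B z (x + y) = B z x + B z y)
    {ι : Type*} [Fintype ι] (b : Module.Basis ι (ZMod 2) W) (x y : W) :
    B x y = ∑ i : ι, ∑ j : ι, b.repr x i * b.repr y j * B (b i) (b j) := by
  classical
  have hx : ∀ z : W, B z y = ∑ i : ι, b.repr z i * B (b i) y := by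
    intro z
    conv_lhs => rw [← b.sum_repr z]
    rw [map_sum' (f := fun w => B w y) (fun u v => hB₁ u v y)]
    exact Finset.sum_congr rfl fun i _ =>
      map_smul' (f := fun w => B w y) (fun u v => hB₁ u v y) _ _
  rw [hx x]
  refine Finset.sum_congr rfl fun i _ => ?_
  have hy : B (b i) y = ∑ j : ι, b.repr y j * B (b i) (b j) := by
    conv_lhs => rw [← b.sum_repr y]
    rw [map_sum' (f := fun w => B (b i) w) (fun u v => hB₂ u v (b i))]
    exact Finset.sum_congr rfl fun j _ =>
      map_smul' (f := fun w => B (b i) w) (fun u v => hB₂ u v (b i)) _ _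
  rw [hy, Finset.mul_sum]
  exact Finset.sum_congr rfl fun j _ => by ring

/-- Existence of a quadratic refinement. -/
lemma exists_refinement (hB₁ : ∀ x y z : W, B (x + y) z = B x z + B y z)
    (hB₂ : ∀ x y z : W, B z (x + y) = B z x + B z y)
    (hBalt : ∀ x : W, B x x = 0) :
    ∃ q : W → ZMod 2, ∀ x y : W, q (x + y) = q x + q y + B x y := by
  classical
  have : Module.Finite (ZMod 2) W := Module.Finite.of_finite
  set n := Module.finrank (ZMod 2) W
  let b : Module.Basis (Fin n) (ZMod 2) W := Module.finBasis (ZMod 2) W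
  let P : Finset (Fin n × Fin n) := Finset.univ.filter (fun p => p.1 < p.2)
  refine ⟨fun x => ∑ p ∈ P, b.repr x p.1 * b.repr x p.2 * B (b p.1) (b p.2), fun x y => ?_⟩
  have hrepr : ∀ i, b.repr (x + y) i = b.repr x i + b.repr y i := by
    intro i; rw [map_add]; rfl
  have expand : ∀ p : Fin n × Fin n,
      b.repr (x+y) p.1 * b.repr (x+y) p.2 * B (b p.1) (b p.2)
      = b.repr x p.1 * b.repr x p.2 * B (b p.1) (b p.2)
        + b.repr y p.1 * b.repr y p.2 * B (b p.1) (b p.2)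
        + (b.repr x p.1 * b.repr y p.2 + b.repr x p.2 * b.repr y p.1) * B (b p.1) (b p.2) := by
    intro p; rw [hrepr, hrepr]; ring
  dsimp only
  rw [Finset.sum_congr rfl (fun p _ => expand p), Finset.sum_add_distrib,
    Finset.sum_add_distrib]
  congr 1
  -- remains: cross sum = B x y
  rw [B_expand B hB₁ hB₂ b x y, ← Finset.sum_product', Finset.univ_product_univ]
  have hsplit := Finset.sum_filter_add_sum_filter_not (Finset.univ : Finset (Fin n × Fin n))
    (fun p => p.1 < p.2) (fun p => b.repr x p.1 * b.repr y p.2 * B (b p.1) (b p.2))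
  rw [← hsplit]
  have hnotlt := Finset.sum_filter_add_sum_filter_not
    (Finset.univ.filter (fun p : Fin n × Fin n => ¬ p.1 < p.2))
    (fun p => p.1 = p.2) (fun p => b.repr x p.1 * b.repr y p.2 * B (b p.1) (b p.2))
  have hdiag : ∑ p ∈ (Finset.univ.filter (fun p : Fin n × Fin n => ¬ p.1 < p.2)).filter
      (fun p => p.1 = p.2), b.repr x p.1 * b.repr y p.2 * B (b p.1) (b p.2) = 0 := by
    refine Finset.sum_eq_zero fun p hp => ?_
    simp only [Finset.mem_filter] at hp
    rw [hp.2, hBalt, mul_zero]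
  have hgt : ∑ p ∈ (Finset.univ.filter (fun p : Fin n × Fin n => ¬ p.1 < p.2)).filter
      (fun p => ¬ p.1 = p.2), b.repr x p.1 * b.repr y p.2 * B (b p.1) (b p.2)
      = ∑ p ∈ P, b.repr x p.2 * b.repr y p.1 * B (b p.1) (b p.2) := by
    refine Finset.sum_nbij' (fun p => Prod.swap p) (fun p => Prod.swap p) ?_ ?_ ?_ ?_ ?_
    · intro p hp
      simp only [Finset.mem_filter, Finset.mem_univ, true_and, P, Prod.fst_swap,
        Prod.snd_swap] at hp ⊢
      omega
    · intro p hp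
      simp only [Finset.mem_filter, Finset.mem_univ, true_and, P, Prod.fst_swap,
        Prod.snd_swap] at hp ⊢
      omega
    · intro p _; exact Prod.swap_swap p
    · intro p _; exact Prod.swap_swap p
    · intro p _
      simp only [Prod.fst_swap, Prod.snd_swap]
      rw [Bsymm B hB₁ hB₂ hBalt (b p.2) (b p.1)]
  rw [← hnotlt, hdiag, zero_add, hgt, ← Finset.sum_add_distrib]
  exact Finset.sum_congr rfl fun p _ => by ring

end main

section main2
variable {W : Type*} [AddCommGroup W] [Module (ZMod 2) W] [Fintype W] [DecidableEq W]

lemma char_sum (B : W → W → ZMod 2)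
    (hB₁ : ∀ x y z : W, B (x + y) z = B x z + B y z)
    (hB₂ : ∀ x y z : W, B z (x + y) = B z x + B z y)
    (hBalt : ∀ x : W, B x x = 0)
    (hBnd : ∀ x : W, (∀ y : W, B x y = 0) → x = 0)
    (v : W) (hv : v ≠ 0) :
    ∑ ℓ ∈ Finset.univ.filter (fun ℓ : W → ZMod 2 => ∀ x y : W, ℓ (x + y) = ℓ x + ℓ y),
      chi (ℓ v) = 0 := by
  classical
  -- find y with B v y = 1
  have hy : ∃ y : W, B v y = 1 := by
    by_contra h
    push_neg at h
    apply hv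
    apply hBnd
    intro y
    rcases zmod2_cases (B v y) with h0 | h1
    · exact h0
    · exact absurd h1 (h y)
  obtain ⟨y, hy⟩ := hy
  set ℓ0 : W → ZMod 2 := fun x => B x y with hℓ0
  have hℓ0add : ∀ x z : W, ℓ0 (x + z) = ℓ0 x + ℓ0 z := fun x z => hB₁ x z y
  refine Finset.sum_involution (fun ℓ _ => fun x => ℓ x + ℓ0 x) ?_ ?_ ?_ ?_
  · intro ℓ _
    have h1 : ℓ0 v = 1 := hy
    simp only [h1]
    exact (by decide : ∀ a : ZMod 2, chi a + chi (a + 1) = 0) (ℓ v)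
  · intro ℓ _ _ hcontra
    have h1 : ℓ0 v = 1 := hy
    have hthis := congrFun hcontra v
    simp only [h1] at hthis
    exact (by decide : ∀ a : ZMod 2, ¬ (a + 1 = a)) (ℓ v) hthis
  · intro ℓ hℓ
    simp only [Finset.mem_filter, Finset.mem_univ, true_and] at hℓ ⊢
    intro x z
    rw [hℓ, hℓ0add]
    ring
  · intro ℓ _
    funext x
    simp only
    rw [add_assoc, zmod2_add_self (ℓ0 x), add_zero]

lemma card_L (B : W → W → ZMod 2)
    (hB₁ : ∀ x y z : W, B (x + y) z = B x z + B y z)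
    (hB₂ : ∀ x y z : W, B z (x + y) = B z x + B z y)
    (hBalt : ∀ x : W, B x x = 0)
    (hBnd : ∀ x : W, (∀ y : W, B x y = 0) → x = 0) :
    (Finset.univ.filter (fun ℓ : W → ZMod 2 => ∀ x y : W, ℓ (x + y) = ℓ x + ℓ y)).card
      = Fintype.card W := by
  classical
  have : Module.Finite (ZMod 2) W := Module.Finite.of_finite
  set n := Module.finrank (ZMod 2) W with hn
  let b : Module.Basis (Fin n) (ZMod 2) W := Module.finBasis (ZMod 2) W
  set L := Finset.univ.filter (fun ℓ : W → ZMod 2 => ∀ x y : W, ℓ (x + y) = ℓ x + ℓ y) with hL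
  have hcardW : Fintype.card W = 2 ^ n := by
    have := Module.card_eq_pow_finrank (K := ZMod 2) (V := W)
    rwa [ZMod.card] at this
  -- lower bound: W injects into L
  have hle1 : Fintype.card W ≤ L.card := by
    have := Finset.card_le_card_of_injOn (s := (Finset.univ : Finset W)) (t := L)
      (fun w => fun x => B x w) ?_ ?_
    · simpa using this
    · intro w _
      simp only [hL, Finset.mem_coe, Finset.mem_filter, Finset.mem_univ, true_and]
      intro x z
      exact hB₁ x z w
    · intro w _ w' _ hww'
      have hz : ∀ x : W, B x (w + w') = 0 := by
        intro x
        have := congrFun hww' x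
        simp only at this
        rw [hB₂, this, zmod2_add_self]
      have h0 : w + w' = 0 := by
        apply hBnd
        intro u
        rw [Bsymm B hB₁ hB₂ hBalt]
        exact hz u
      have := congrArg (fun t => t + w') h0
      simpa [add_assoc, w_add_self w'] using this
  -- upper bound: L injects into Fin n → ZMod 2
  have hle2 : L.card ≤ Fintype.card W := by
    have := Finset.card_le_card_of_injOn (s := L) (t := (Finset.univ : Finset (Fin n → ZMod 2)))
      (fun ℓ => fun i => ℓ (b i)) (fun _ _ => Finset.mem_univ _) ?_
    · rw [Finset.card_univ, Fintype.card_fun, ZMod.card, Fintype.card_fin] at this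
      rw [hcardW]
      exact this
    · intro ℓ hℓ ℓ' hℓ' hagree
      simp only [hL, Finset.coe_filter, Set.mem_setOf_eq] at hℓ hℓ'
      funext z
      have hz := b.sum_repr z
      calc ℓ z = ℓ (∑ i : Fin n, b.repr z i • b i) := by rw [hz]
        _ = ∑ i : Fin n, b.repr z i * ℓ (b i) := by
            rw [map_sum' hℓ.2]
            exact Finset.sum_congr rfl fun i _ => map_smul' hℓ.2 _ _
        _ = ∑ i : Fin n, b.repr z i * ℓ' (b i) := by
            refine Finset.sum_congr rfl fun i _ => ?_
            have := congrFun hagree i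
            simp only at this
            rw [this]
        _ = ℓ' (∑ i : Fin n, b.repr z i • b i) := by
            rw [map_sum' hℓ'.2]
            exact (Finset.sum_congr rfl fun i _ => map_smul' hℓ'.2 _ _).symm
        _ = ℓ' z := by rw [hz]
  omega

end main2

theorem sum_over_quadratic_refinements
    {W : Type*} [AddCommGroup W] [Module (ZMod 2) W] [Fintype W] [DecidableEq W]
    (B : W → W → ZMod 2)
    (hB₁ : ∀ x y z : W, B (x + y) z = B x z + B y z)
    (hB₂ : ∀ x y z : W, B z (x + y) = B z x + B z y)
    (hBalt : ∀ x : W, B x x = 0)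
    (hBnd : ∀ x : W, (∀ y : W, B x y = 0) → x = 0)
    (α : W) :
    (∑ q ∈ Finset.univ.filter
        (fun q : W → ZMod 2 => ∀ x y : W, q (x + y) = q x + q y + B x y),
      ∑ β : W, chi (q β + q α)) = Fintype.card W := by
  classical
  obtain ⟨q0, hq0⟩ := exists_refinement B hB₁ hB₂ hBalt
  have h2 : (2 : ZMod 2) = 0 := by decide
  have step1 : (∑ q ∈ Finset.univ.filter
        (fun q : W → ZMod 2 => ∀ x y : W, q (x + y) = q x + q y + B x y),
      ∑ β : W, chi (q β + q α))
      = ∑ ℓ ∈ Finset.univ.filter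
          (fun ℓ : W → ZMod 2 => ∀ x y : W, ℓ (x + y) = ℓ x + ℓ y),
        ∑ β : W, chi ((q0 β + ℓ β) + (q0 α + ℓ α)) := by
    refine Finset.sum_bij' (fun q _ => fun x => q x + q0 x)
      (fun ℓ _ => fun x => q0 x + ℓ x) ?_ ?_ ?_ ?_ ?_
    · intro q hq
      simp only [Finset.mem_filter, Finset.mem_univ, true_and] at hq ⊢
      intro x y
      rw [hq, hq0]
      linear_combination (B x y) * h2
    · intro ℓ hℓ
      simp only [Finset.mem_filter, Finset.mem_univ, true_and] at hℓ ⊢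
      intro x y
      rw [hq0, hℓ]
      ring
    · intro q _
      funext x
      simp only
      linear_combination (q0 x) * h2
    · intro ℓ _
      funext x
      simp only
      linear_combination (q0 x) * h2
    · intro q _
      refine Finset.sum_congr rfl fun β _ => ?_
      simp only
      congr 1
      linear_combination (-(q0 β) - q0 α) * h2
  rw [step1]
  have step2 : ∀ ℓ ∈ Finset.univ.filter
      (fun ℓ : W → ZMod 2 => ∀ x y : W, ℓ (x + y) = ℓ x + ℓ y),
      ∑ β : W, chi ((q0 β + ℓ β) + (q0 α + ℓ α))
      = ∑ β : W, chi (q0 β + q0 α) * chi (ℓ (β + α)) := by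
    intro ℓ hℓ
    simp only [Finset.mem_filter, Finset.mem_univ, true_and] at hℓ
    refine Finset.sum_congr rfl fun β _ => ?_
    rw [← chi_add, hℓ β α]
    congr 1
    ring
  rw [Finset.sum_congr rfl step2, Finset.sum_comm]
  have step3 : ∀ β : W, (∑ ℓ ∈ Finset.univ.filter
      (fun ℓ : W → ZMod 2 => ∀ x y : W, ℓ (x + y) = ℓ x + ℓ y),
      chi (q0 β + q0 α) * chi (ℓ (β + α)))
      = chi (q0 β + q0 α) * ∑ ℓ ∈ Finset.univ.filter
          (fun ℓ : W → ZMod 2 => ∀ x y : W, ℓ (x + y) = ℓ x + ℓ y),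
        chi (ℓ (β + α)) := fun β => by rw [Finset.mul_sum]
  rw [Finset.sum_congr rfl (fun β _ => step3 β)]
  rw [Finset.sum_eq_single α]
  · have hz : ∀ ℓ ∈ Finset.univ.filter
        (fun ℓ : W → ZMod 2 => ∀ x y : W, ℓ (x + y) = ℓ x + ℓ y),
        chi (ℓ (α + α)) = (1 : ℤ) := by
      intro ℓ hℓ
      simp only [Finset.mem_filter, Finset.mem_univ, true_and] at hℓ
      rw [w_add_self α, map_zero' hℓ]
      rfl
    rw [Finset.sum_congr rfl hz, Finset.sum_const, zmod2_add_self (q0 α)]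
    rw [card_L B hB₁ hB₂ hBalt hBnd]
    simp [chi]
  · intro β _ hβ
    have hne : β + α ≠ 0 := by
      intro h
      apply hβ
      have := congrArg (fun t => t + α) h
      simpa [add_assoc, w_add_self α] using this
    rw [char_sum B hB₁ hB₂ hBalt hBnd _ hne, mul_zero]
  · intro h
    exact absurd (Finset.mem_univ α) h
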